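/- Let A, B be bounded linear operators on a complex Hilbert space H and let x ∈ H be a unit vector. Then |⟨Ax,x⟩ ⟨Bx,x⟩| ≤ (|⟨BAx,x⟩| + ‖Ax‖‖B*x‖)/2. -/

import Mathlib

open scoped InnerProductSpace

lemma buzano {H : Type*} [NormedAddCommGroup H] [InnerProductSpace ℂ H]
    (u v e : H) (he : ‖e‖ = 1) :
    ‖⟪u, e⟫_ℂ * ⟪e, v⟫_ℂ‖ ≤ (‖⟪u, v⟫_ℂ‖ + ‖u‖ * ‖v‖) / 2 := by
  set c : ℂ := ⟪e, v⟫_ℂ with hc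
  set w : H := (2 : ℂ) • c • e - v with hw
  have key : (2 : ℂ) * (⟪u, e⟫_ℂ * c) = ⟪u, v⟫_ℂ + ⟪u, w⟫_ℂ := by
    rw [hw, inner_sub_right, inner_smul_right, inner_smul_right]; ring
  have hnw : ‖w‖ = ‖v‖ := by
    have h2 : ‖w‖ ^ 2 = ‖v‖ ^ 2 := by
      rw [hw, @norm_sub_sq ℂ]
      have h1 : ⟪(2 : ℂ) • c • e, v⟫_ℂ = 2 * (starRingEnd ℂ c * c) := by
        rw [inner_smul_left, inner_smul_left, ← hc, map_ofNat]
      have h2 : ‖(2 : ℂ) • c • e‖ = 2 * ‖c‖ := by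
        rw [norm_smul, norm_smul, he]; simp
      rw [h1, h2]
      have hcc : (starRingEnd ℂ) c * c = ((‖c‖ ^ 2 : ℝ) : ℂ) := by
        rw [← Complex.normSq_eq_conj_mul_self, Complex.normSq_eq_norm_sq]

      have : Complex.re (2 * (starRingEnd ℂ c * c)) = 2 * ‖c‖ ^ 2 := by
        rw [hcc]; norm_cast
      rw [RCLike.re_to_complex, this]
      ring
    nlinarith [norm_nonneg w, norm_nonneg v]
  have hle : ‖(2 : ℂ) * (⟪u, e⟫_ℂ * c)‖ ≤ ‖⟪u, v⟫_ℂ‖ + ‖u‖ * ‖v‖ := by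
    rw [key]
    calc ‖⟪u, v⟫_ℂ + ⟪u, w⟫_ℂ‖ ≤ ‖⟪u, v⟫_ℂ‖ + ‖⟪u, w⟫_ℂ‖ := norm_add_le _ _
      _ ≤ ‖⟪u, v⟫_ℂ‖ + ‖u‖ * ‖w‖ := by
          gcongr; exact norm_inner_le_norm u w
      _ = ‖⟪u, v⟫_ℂ‖ + ‖u‖ * ‖v‖ := by rw [hnw]
  rw [norm_mul] at hle
  simp only [Complex.norm_ofNat] at hle
  linarith

theorem stmt_1 {H : Type*} [NormedAddCommGroup H] [InnerProductSpace ℂ H] [CompleteSpace H]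
    (A B : H →L[ℂ] H) (x : H) (hx : ‖x‖ = 1) :
    ‖⟪A x, x⟫_ℂ * ⟪B x, x⟫_ℂ‖ ≤
      (‖⟪B (A x), x⟫_ℂ‖ + ‖A x‖ * ‖(ContinuousLinearMap.adjoint B) x‖) / 2 := by
  have h := buzano (A x) ((ContinuousLinearMap.adjoint B) x) x hx
  rw [ContinuousLinearMap.adjoint_inner_right, ContinuousLinearMap.adjoint_inner_right] at h
  exact h
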